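/- Let {-ω_k}_{k≥1} be the zeros of the Airy function on the negative real axis, in decreasing order (so ω_k > 0 increasing). Then for each k ≥ 1, L(ω_k) = 2πk, where L(ω) = π + i log(A_-(ω)/A_+(ω)). -/

import Mathlib

open Complex Real

/-- `Ai` is the Airy function: the unique entire solution of `Ai'' z = z * Ai z`
with the standard initial values. -/
def IsAiry (Ai : ℂ → ℂ) : Prop :=
  Differentiable ℂ Ai ∧ Differentiable ℂ (deriv Ai) ∧
  (∀ z : ℂ, deriv (deriv Ai) z = z * Ai z) ∧
  Ai 0 = 1 / ((3 : ℂ) ^ ((2 : ℂ) / 3) * Complex.Gamma (2 / 3)) ∧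
  deriv Ai 0 = -(1 / ((3 : ℂ) ^ ((1 : ℂ) / 3) * Complex.Gamma (1 / 3)))


/-- derivative along a rotated ray -/
lemma rot_deriv {Ai : ℂ → ℂ} (hA : Differentiable ℂ Ai) (c : ℂ) (x : ℝ) :
    HasDerivAt (fun t : ℝ => Ai (c * t)) (c * deriv Ai (c * x)) x := by
  have h1 : HasDerivAt (fun z : ℂ => c * z) (c * 1) (x : ℂ) :=
    (hasDerivAt_id (x : ℂ)).const_mul c
  have h2 := ((hA (c * (x : ℂ))).hasDerivAt.comp (x : ℂ) h1)
  have h3 := h2.comp_ofReal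
  simpa [Function.comp, mul_comm] using h3

lemma pair_deriv {Ai : ℂ → ℂ} (hAi : IsAiry Ai) (c : ℂ) (hc : c ^ 3 = -1) (x : ℝ) :
    HasDerivAt (fun t : ℝ => c * Ai (c * t)) (c ^ 2 * deriv Ai (c * x)) x ∧
    HasDerivAt (fun t : ℝ => c ^ 2 * deriv Ai (c * t)) (-(x : ℂ) * (c * Ai (c * x))) x := by
  constructor
  · have h := (rot_deriv hAi.1 c x).const_mul c
    exact h.congr_deriv (by ring)
  · have h := (rot_deriv hAi.2.1 c x).const_mul (c ^ 2)
    rw [hAi.2.2.1] at h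
    exact h.congr_deriv (by linear_combination (x : ℂ) * Ai (c * x) * c * hc)

lemma ode_zero {b : ℝ} (hb : 0 < b) (f : ℝ → ℂ × ℂ)
    (hf : ∀ t : ℝ, HasDerivAt f ((f t).2, -(t : ℂ) * (f t).1) t)
    (h0 : f 0 = 0) : ∀ t ∈ Set.Icc (0 : ℝ) b, f t = 0 := by
  set τ : ℝ → ℝ := fun t => max (min t b) 0 with hτdef
  set v : ℝ → ℂ × ℂ → ℂ × ℂ := fun t p => (p.2, -((τ t : ℝ) : ℂ) * p.1) with hvdef
  set K : NNReal := (max 1 b).toNNReal with hKdef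
  have hKcoe : (K : ℝ) = max 1 b :=
    Real.coe_toNNReal _ (le_trans zero_le_one (le_max_left _ _))
  have hτb : ∀ t, |τ t| ≤ b := by
    intro t
    rw [abs_le]
    constructor
    · have : (0:ℝ) ≤ τ t := le_max_right _ _
      linarith
    · exact max_le (le_trans (min_le_right _ _) le_rfl) hb.le
  have hlip : ∀ t, LipschitzWith K (v t) := by
    intro t
    apply LipschitzWith.of_dist_le_mul
    intro p q
    rw [hKcoe, Prod.dist_eq, Prod.dist_eq]
    have h2 : dist (-((τ t : ℝ) : ℂ) * p.1) (-((τ t : ℝ) : ℂ) * q.1)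
        = |τ t| * dist p.1 q.1 := by
      rw [dist_eq_norm, dist_eq_norm, ← mul_sub, norm_mul]
      simp [Real.norm_eq_abs]
    show max (dist p.2 q.2) _ ≤ _
    rw [h2]
    have d1 := dist_nonneg (x := p.1) (y := q.1)
    have d2 := dist_nonneg (x := p.2) (y := q.2)
    have hm1 := le_max_left (dist p.1 q.1) (dist p.2 q.2)
    have hm2 := le_max_right (dist p.1 q.1) (dist p.2 q.2)
    have hb1 : (1:ℝ) ≤ max 1 b := le_max_left _ _
    have hb2 : b ≤ max 1 b := le_max_right _ _
    have hτt := hτb t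
    have hτ0 : (0:ℝ) ≤ |τ t| := abs_nonneg _
    apply max_le
    · nlinarith
    · nlinarith
  have heq : Set.EqOn f (fun _ => (0 : ℂ × ℂ)) (Set.Icc 0 b) := by
    apply ODE_solution_unique (v := v) hlip
    · exact fun t _ => (hf t).continuousAt.continuousWithinAt
    · intro t ht
      have hτt : τ t = t := by
        rw [hτdef]
        simp only
        rw [min_eq_left ht.2.le, max_eq_left ht.1]
      have := (hf t).hasDerivWithinAt (s := Set.Ici t)
      convert this using 1
      rw [hvdef]
      simp only
      rw [hτt]
    · exact continuousOn_const
    · intro t ht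
      have : v t ((fun _ => (0 : ℂ × ℂ)) t) = 0 := by
        simp [hvdef, Prod.ext_iff]
      rw [this]
      exact (hasDerivAt_const t (0 : ℂ × ℂ)).hasDerivWithinAt
    · simpa using h0
  intro t ht
  exact heq ht

lemma cube_c1 : (Complex.exp (↑π * I / 3)) ^ 3 = -1 := by
  rw [← Complex.exp_nat_mul]
  have h : ((3 : ℕ) : ℂ) * (↑π * I / 3) = ↑π * I := by push_cast; ring
  rw [h, Complex.exp_pi_mul_I]

lemma cube_c2 : (Complex.exp (-(↑π * I) / 3)) ^ 3 = -1 := by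
  rw [← Complex.exp_nat_mul]
  have h : ((3 : ℕ) : ℂ) * (-(↑π * I) / 3) = -(↑π * I) := by push_cast; ring
  rw [h, Complex.exp_neg, Complex.exp_pi_mul_I]
  norm_num

lemma cube_neg_one : ((-1 : ℂ)) ^ 3 = -1 := by norm_num

lemma prod_c1c2 : Complex.exp (↑π * I / 3) * Complex.exp (-(↑π * I) / 3) = 1 := by
  rw [← Complex.exp_add, show (↑π * I / 3 + -(↑π * I) / 3 : ℂ) = 0 by ring, Complex.exp_zero]

lemma sum_c1c2 : Complex.exp (↑π * I / 3) + Complex.exp (-(↑π * I) / 3) = 1 := by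
  have h1 : (↑π * I / 3 : ℂ) = ((π / 3 : ℝ) : ℂ) * I := by push_cast; ring
  have h2 : (-(↑π * I) / 3 : ℂ) = ((-(π / 3) : ℝ) : ℂ) * I := by push_cast; ring
  rw [h1, h2, Complex.exp_mul_I, Complex.exp_mul_I,
    ← Complex.ofReal_cos, ← Complex.ofReal_sin, ← Complex.ofReal_cos, ← Complex.ofReal_sin,
    Real.cos_neg, Real.sin_neg, Real.cos_pi_div_three, Real.sin_pi_div_three]
  push_cast
  ring

lemma airy_connection {Ai : ℂ → ℂ} (hAi : IsAiry Ai) (x : ℝ) (hx : 0 ≤ x) :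
    Ai (-(x : ℂ)) = Complex.exp (↑π * I / 3) * Ai (Complex.exp (↑π * I / 3) * x) +
      Complex.exp (-(↑π * I) / 3) * Ai (Complex.exp (-(↑π * I) / 3) * x) := by
  set c1 : ℂ := Complex.exp (↑π * I / 3) with hc1
  set c2 : ℂ := Complex.exp (-(↑π * I) / 3) with hc2
  set f : ℝ → ℂ × ℂ := fun t =>
    ((-1) * Ai ((-1) * t) + c1 * Ai (c1 * t) + c2 * Ai (c2 * t),
     (-1 : ℂ) ^ 2 * deriv Ai ((-1) * t) + c1 ^ 2 * deriv Ai (c1 * t)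
        + c2 ^ 2 * deriv Ai (c2 * t)) with hfdef
  have hf : ∀ t : ℝ, HasDerivAt f ((f t).2, -(t : ℂ) * (f t).1) t := by
    intro t
    have p0 := pair_deriv hAi (-1) cube_neg_one t
    have p1 := pair_deriv hAi c1 cube_c1 t
    have p2 := pair_deriv hAi c2 cube_c2 t
    have h := (((p0.1.add p1.1).add p2.1).prodMk ((p0.2.add p1.2).add p2.2))
    exact h.congr_deriv (Prod.ext rfl (by simp only [hfdef]; ring))
  have hsq : c1 ^ 2 + c2 ^ 2 = -1 := by
    linear_combination (c1 + c2 + 1) * sum_c1c2 - 2 * prod_c1c2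
  have hz : ((0 : ℝ) : ℂ) = 0 := by norm_num
  have e1 : (f 0).1 = 0 := by
    show (-1 : ℂ) * Ai ((-1) * ((0:ℝ):ℂ)) + c1 * Ai (c1 * ((0:ℝ):ℂ)) + c2 * Ai (c2 * ((0:ℝ):ℂ)) = 0
    rw [hz, mul_zero, mul_zero, mul_zero]
    linear_combination Ai 0 * sum_c1c2
  have e2 : (f 0).2 = 0 := by
    show (-1 : ℂ) ^ 2 * deriv Ai ((-1) * ((0:ℝ):ℂ)) + c1 ^ 2 * deriv Ai (c1 * ((0:ℝ):ℂ))
        + c2 ^ 2 * deriv Ai (c2 * ((0:ℝ):ℂ)) = 0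
    rw [hz, mul_zero, mul_zero, mul_zero]
    linear_combination deriv Ai 0 * hsq
  have h0 : f 0 = 0 := Prod.ext e1 e2
  have := ode_zero (b := x + 1) (by linarith) f hf h0 x ⟨hx, by linarith⟩
  have h1 : (f x).1 = 0 := by rw [this]; rfl
  rw [hfdef] at h1
  simp only at h1
  have hneg : ((-1 : ℂ)) * (x : ℂ) = -(x : ℂ) := by ring
  rw [hneg] at h1
  linear_combination -h1

lemma wronskian_const {Ai : ℂ → ℂ} (hAi : IsAiry Ai) (x : ℝ) :
    (Complex.exp (↑π * I / 3) * Ai (Complex.exp (↑π * I / 3) * x)) *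
      ((Complex.exp (-(↑π * I) / 3)) ^ 2 * deriv Ai (Complex.exp (-(↑π * I) / 3) * x)) -
    ((Complex.exp (↑π * I / 3)) ^ 2 * deriv Ai (Complex.exp (↑π * I / 3) * x)) *
      (Complex.exp (-(↑π * I) / 3) * Ai (Complex.exp (-(↑π * I) / 3) * x))
    = (Complex.exp (-(↑π * I) / 3) - Complex.exp (↑π * I / 3)) * (Ai 0 * deriv Ai 0) := by
  set c1 : ℂ := Complex.exp (↑π * I / 3) with hc1
  set c2 : ℂ := Complex.exp (-(↑π * I) / 3) with hc2
  set W : ℝ → ℂ := fun t => (c1 * Ai (c1 * t)) * (c2 ^ 2 * deriv Ai (c2 * t)) -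
    (c1 ^ 2 * deriv Ai (c1 * t)) * (c2 * Ai (c2 * t)) with hW
  have hd : ∀ t : ℝ, HasDerivAt W 0 t := by
    intro t
    have p1 := pair_deriv hAi c1 cube_c1 t
    have p2 := pair_deriv hAi c2 cube_c2 t
    have h := (p1.1.mul p2.2).sub (p1.2.mul p2.1)
    exact h.congr_deriv (by ring)
  have hconst := is_const_of_deriv_eq_zero (fun t => (hd t).differentiableAt)
    (fun t => (hd t).deriv) x 0
  show W x = _
  rw [hconst]
  show (c1 * Ai (c1 * ((0:ℝ):ℂ))) * (c2 ^ 2 * deriv Ai (c2 * ((0:ℝ):ℂ))) -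
    (c1 ^ 2 * deriv Ai (c1 * ((0:ℝ):ℂ))) * (c2 * Ai (c2 * ((0:ℝ):ℂ))) = _
  rw [show ((0:ℝ):ℂ) = 0 by norm_num, mul_zero, mul_zero]
  linear_combination (c2 - c1) * Ai 0 * deriv Ai 0 * prod_c1c2

lemma W0_ne {Ai : ℂ → ℂ} (hAi : IsAiry Ai) :
    (Complex.exp (-(↑π * I) / 3) - Complex.exp (↑π * I / 3)) * (Ai 0 * deriv Ai 0) ≠ 0 := by
  apply mul_ne_zero
  · intro h
    have him := congrArg Complex.im h
    have h1 : (↑π * I / 3 : ℂ) = ((π / 3 : ℝ) : ℂ) * I := by push_cast; ring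
    have h2 : (-(↑π * I) / 3 : ℂ) = ((-(π / 3) : ℝ) : ℂ) * I := by push_cast; ring
    rw [Complex.sub_im, h1, h2, Complex.exp_ofReal_mul_I_im, Complex.exp_ofReal_mul_I_im,
      Real.sin_neg, Real.sin_pi_div_three, Complex.zero_im] at him
    have h3 : Real.sqrt 3 > 0 := by positivity
    nlinarith [him]
  · apply mul_ne_zero
    · rw [hAi.2.2.2.1]
      apply one_div_ne_zero
      apply mul_ne_zero
      · rw [Complex.cpow_def_of_ne_zero (by norm_num)]
        exact Complex.exp_ne_zero _
      · apply Complex.Gamma_ne_zero_of_re_pos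
        rw [show ((2:ℂ)/3) = ((2/3 : ℝ) : ℂ) by norm_num, Complex.ofReal_re]
        norm_num
    · rw [hAi.2.2.2.2]
      apply neg_ne_zero.mpr
      apply one_div_ne_zero
      apply mul_ne_zero
      · rw [Complex.cpow_def_of_ne_zero (by norm_num)]
        exact Complex.exp_ne_zero _
      · apply Complex.Gamma_ne_zero_of_re_pos
        rw [show ((1:ℂ)/3) = ((1/3 : ℝ) : ℂ) by norm_num, Complex.ofReal_re]
        norm_num

lemma strictMono_surj_nat_id (N : ℕ → ℕ) (h1 : StrictMono N) (h2 : Function.Surjective N) :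
    ∀ k, N k = k := by
  intro k
  induction k using Nat.strong_induction_on with
  | _ k ih =>
    obtain ⟨m, hm⟩ := h2 k
    have hmk : m ≤ k := hm ▸ h1.le_apply
    rcases lt_or_eq_of_le hmk with h | h
    · have := ih m h
      rw [this] at hm
      omega
    · rw [← h]
      rw [← h] at hm
      exact hm


/-- Let `-ω k` (for `k ≥ 1`, here indexed by `k : ℕ` with `ω k` the `(k+1)`-st zero) be the
zeros of the Airy function on the negative real axis, with `ω` positive and strictly
increasing, enumerating all of them. Let `L` be the real analytic strictly increasing branch
of `π + i log(A₋/A₊)` with `L 0 = π/3`, mapping `ℝ` bijectively onto `(0, ∞)`.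
Then `L (ω k) = 2π(k+1)` for every `k`. -/
theorem stmt4 (Ai : ℂ → ℂ) (hAi : IsAiry Ai)
    (ω : ℕ → ℝ) (hωpos : ∀ k, 0 < ω k) (hωmono : StrictMono ω)
    (hωzero : ∀ k, Ai (-(ω k : ℂ)) = 0)
    (hωall : ∀ x : ℝ, 0 < x → Ai (-(x : ℂ)) = 0 → ∃ k, x = ω k)
    (L : ℝ → ℝ) (hLa : AnalyticOnNhd ℝ L Set.univ) (hL0 : L 0 = π / 3)
    (hLmono : StrictMono L) (hLrange : Set.range L = Set.Ioi 0)
    (hLrel : ∀ x : ℝ,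
      Complex.exp (↑π * I / 3) * Ai (Complex.exp (↑π * I / 3) * x) =
        Complex.exp (-(↑π * I) / 3) * Ai (Complex.exp (-(↑π * I) / 3) * x) *
          Complex.exp (I * (↑π - (L x : ℂ)))) :
    ∀ k : ℕ, L (ω k) = 2 * π * (k + 1) := by
  -- A₋ never vanishes
  have hAm_ne : ∀ x : ℝ, Complex.exp (-(↑π * I) / 3) * Ai (Complex.exp (-(↑π * I) / 3) * x) ≠ 0 := by
    intro x h0
    have hp := hLrel x
    rw [h0, zero_mul] at hp
    have hW := wronskian_const hAi x
    rw [hp, h0, zero_mul, mul_zero, sub_zero] at hW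
    exact W0_ne hAi hW.symm
  -- forward direction: a zero forces L x ∈ 2π(ℕ+1)
  have hforward : ∀ x : ℝ, 0 < x → Ai (-(x : ℂ)) = 0 → ∃ n : ℕ, L x = 2 * π * (n + 1) := by
    intro x hx hzero
    have conn := airy_connection hAi x hx.le
    rw [hLrel x] at conn
    have h1 : (Complex.exp (-(↑π * I) / 3) * Ai (Complex.exp (-(↑π * I) / 3) * x)) *
        (Complex.exp (I * (↑π - (L x : ℂ))) + 1) = 0 := by
      linear_combination hzero - conn
    rcases mul_eq_zero.mp h1 with h | h
    · exact absurd h (hAm_ne x)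
    have hexp : Complex.exp (I * (↑π - (L x : ℂ))) = Complex.exp (↑π * I) := by
      rw [Complex.exp_pi_mul_I]
      linear_combination h
    obtain ⟨n, hn⟩ := Complex.exp_eq_exp_iff_exists_int.mp hexp
    have h2 : (I : ℂ) * ((↑π - (L x : ℂ)) - ↑π - (n : ℂ) * (2 * ↑π)) = 0 := by
      linear_combination hn
    rcases mul_eq_zero.mp h2 with h3 | h3
    · exact absurd h3 Complex.I_ne_zero
    have h4 : ((L x : ℝ) : ℂ) = (((-2) * π * n : ℝ) : ℂ) := by
      push_cast
      linear_combination -h3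
    have h5 : L x = (-2) * π * n := Complex.ofReal_inj.mp h4
    have hLx : 0 < L x := by
      have := hLmono hx
      rw [hL0] at this
      have := Real.pi_pos
      linarith
    have hn0 : (n : ℝ) < 0 := by nlinarith [Real.pi_pos]
    have hnint : n < 0 := by exact_mod_cast hn0
    refine ⟨(-n - 1).toNat, ?_⟩
    have hnn : (0 : ℤ) ≤ -n - 1 := by omega
    have h6 : (((-n - 1).toNat : ℝ)) = -(n : ℝ) - 1 := by
      rw [← Int.cast_natCast, Int.toNat_of_nonneg hnn]
      push_cast
      ring
    rw [h5, h6]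
    ring
  -- backward direction
  have hback : ∀ (x : ℝ) (n : ℕ), 0 ≤ x → L x = 2 * π * (n + 1) → Ai (-(x : ℂ)) = 0 := by
    intro x n hx hn
    rw [airy_connection hAi x hx, hLrel x]
    have harg : I * (↑π - ((L x : ℝ) : ℂ)) = ↑π * I + ((-(n : ℤ) - 1 : ℤ) : ℂ) * (2 * ↑π * I) := by
      rw [hn]
      push_cast
      ring
    rw [harg, Complex.exp_add, Complex.exp_pi_mul_I, Complex.exp_int_mul_two_pi_mul_I]
    ring
  -- choose N
  have key : ∀ k, ∃ n : ℕ, L (ω k) = 2 * π * (n + 1) :=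
    fun k => hforward (ω k) (hωpos k) (hωzero k)
  choose N hN using key
  have hNmono : StrictMono N := by
    intro a b hab
    have := hLmono (hωmono hab)
    rw [hN a, hN b] at this
    have hπ := Real.pi_pos
    have : (N a : ℝ) < N b := by nlinarith
    exact_mod_cast this
  have hNsurj : Function.Surjective N := by
    intro n
    have hmem : (2 * π * (n + 1) : ℝ) ∈ Set.Ioi 0 := by
      have := Real.pi_pos
      simp only [Set.mem_Ioi]
      have hn0 : (0:ℝ) ≤ (n:ℝ) := Nat.cast_nonneg n
      nlinarith [Real.pi_pos]
    rw [← hLrange] at hmem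
    obtain ⟨x, hx⟩ := hmem
    have hxpos : 0 < x := by
      by_contra hle
      push_neg at hle
      have : L x ≤ L 0 := hLmono.le_iff_le.mpr hle
      rw [hL0, hx] at this
      have hn0 : (0:ℝ) ≤ (n:ℝ) := Nat.cast_nonneg n
      nlinarith [Real.pi_gt_three, Real.pi_pos]
    have hzero := hback x n hxpos.le hx
    obtain ⟨k, hk⟩ := hωall x hxpos hzero
    refine ⟨k, ?_⟩
    have : L (ω k) = 2 * π * (n + 1) := by rw [← hk, hx]
    rw [hN k] at this
    have hπ := Real.pi_pos
    have : (N k : ℝ) = n := by nlinarith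
    exact_mod_cast this
  intro k
  rw [hN k, strictMono_surj_nat_id N hNmono hNsurj k]
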